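/- Let p : ℕ → ℝ be nonnegative with ∑'_{k} p k = 1, and let c₁ > 0 be such that p k ≥ c₁ · k^(−3/2) for every k ≥ 1. Let ε be a real with 0 < ε ≤ 1 and let n ≥ 1 be an integer with ε · n ≥ 1. Then ∑_{k : ℕ, k ≥ 1, n(1−ε) ≤ k ≤ n(1+ε)} p k ≥ (c₁ / (2·√2)) · ε / √n. -/

import Mathlib

/-- Window-mass estimate for approximate-size Boltzmann sampling: if
`p k ≥ c₁ k^{-3/2}` for all `k ≥ 1`, then the probability that the size lies
in `[n(1-ε), n(1+ε)]` is at least `(c₁/(2√2)) ε / √n`. -/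
theorem stmt_13 (p : ℕ → ℝ) (hnn : ∀ k, 0 ≤ p k) (hsum : ∑' k, p k = 1)
    (c₁ : ℝ) (hc₁ : 0 < c₁)
    (hlow : ∀ k : ℕ, 1 ≤ k → c₁ * (k : ℝ) ^ (-(3 / 2) : ℝ) ≤ p k)
    (ε : ℝ) (hε0 : 0 < ε) (hε1 : ε ≤ 1)
    (n : ℕ) (hn : 1 ≤ n) (hεn : 1 ≤ ε * n) :
    (c₁ / (2 * Real.sqrt 2)) * ε / Real.sqrt n
      ≤ ∑' k : {k : ℕ // 1 ≤ k ∧ (n : ℝ) * (1 - ε) ≤ (k : ℝ) ∧ (k : ℝ) ≤ (n : ℝ) * (1 + ε)},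
          p (k : ℕ) := by
  have hnR : (0 : ℝ) < n := by exact_mod_cast hn
  have hsummable : Summable p := by
    by_contra h
    rw [tsum_eq_zero_of_not_summable h] at hsum
    norm_num at hsum
  set S : Set ℕ := {k : ℕ | 1 ≤ k ∧ (n : ℝ) * (1 - ε) ≤ (k : ℝ) ∧ (k : ℝ) ≤ (n : ℝ) * (1 + ε)}
    with hS
  set m : ℕ := ⌊(n : ℝ) * (1 + ε)⌋₊ with hm
  have hx0 : (0 : ℝ) ≤ (n : ℝ) * (1 + ε) := by positivity
  have hmn : n ≤ m := Nat.le_floor (by nlinarith)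
  have hm2n : (m : ℝ) ≤ 2 * n := by
    have := Nat.floor_le hx0
    nlinarith
  have hm1 : (n : ℝ) * (1 + ε) - 1 ≤ m := by
    have := Nat.lt_floor_add_one ((n : ℝ) * (1 + ε))
    push_cast at this ⊢
    linarith
  have hsub : ∀ k ∈ Finset.Icc n m, k ∈ S := by
    intro k hk
    rw [Finset.mem_Icc] at hk
    have h1 : (n : ℝ) ≤ k := by exact_mod_cast hk.1
    have h2 : (k : ℝ) ≤ m := by exact_mod_cast hk.2
    refine ⟨le_trans hn hk.1, ?_, ?_⟩
    · nlinarith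
    · exact h2.trans (Nat.floor_le hx0)
  -- lower bound for each term
  have hbound : ∀ k ∈ Finset.Icc n m, c₁ * ((2 : ℝ) * n) ^ (-(3 / 2) : ℝ) ≤ p k := by
    intro k hk
    rw [Finset.mem_Icc] at hk
    have hk1 : 1 ≤ k := le_trans hn hk.1
    have hkR : (0 : ℝ) < k := by exact_mod_cast hk1
    have hk2n : (k : ℝ) ≤ 2 * n := by
      have : (k : ℝ) ≤ m := by exact_mod_cast hk.2
      linarith
    calc c₁ * ((2 : ℝ) * n) ^ (-(3 / 2) : ℝ)
        ≤ c₁ * (k : ℝ) ^ (-(3 / 2) : ℝ) := by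
          exact mul_le_mul_of_nonneg_left
            (Real.rpow_le_rpow_of_nonpos hkR hk2n (by norm_num)) hc₁.le
      _ ≤ p k := hlow k hk1
  have hfin : ∑ k ∈ Finset.Icc n m, p k
      ≤ ∑' k : S, p (k : ℕ) := by
    rw [tsum_subtype S fun k => p k]
    have h1 : ∑ k ∈ Finset.Icc n m, p k = ∑ k ∈ Finset.Icc n m, S.indicator p k := by
      refine Finset.sum_congr rfl fun k hk => ?_
      rw [Set.indicator_of_mem (hsub k hk)]
    rw [h1]
    refine (hsummable.indicator S).sum_le_tsum _ (fun k _ => ?_)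
    exact Set.indicator_nonneg (fun k _ => hnn k) k
  have hcard : ((Finset.Icc n m).card : ℝ) = (m : ℝ) - n + 1 := by
    rw [Nat.card_Icc]
    have : m + 1 - n = m - n + 1 := by omega
    rw [this]
    push_cast [Nat.cast_sub hmn]
    ring
  have hsumlow : ((Finset.Icc n m).card : ℝ) * (c₁ * ((2 : ℝ) * n) ^ (-(3 / 2) : ℝ))
      ≤ ∑ k ∈ Finset.Icc n m, p k := by
    rw [← nsmul_eq_mul]
    exact Finset.card_nsmul_le_sum _ _ _ hbound
  have hcardlow : ε * n ≤ ((Finset.Icc n m).card : ℝ) := by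
    rw [hcard]; nlinarith
  -- compute the rpow
  have hrpow : ((2 : ℝ) * n) ^ (-(3 / 2) : ℝ)
      = 1 / (2 * n * (Real.sqrt 2 * Real.sqrt n)) := by
    have h2n : (0 : ℝ) < 2 * n := by positivity
    rw [show (-(3 / 2) : ℝ) = (-1) + (-(1/2)) by norm_num,
      Real.rpow_add h2n, Real.rpow_neg_one,
      Real.rpow_neg (le_of_lt h2n)]
    rw [show ((2 : ℝ) * n) ^ ((1:ℝ)/2) = Real.sqrt (2 * n) from
      (Real.sqrt_eq_rpow _).symm, Real.sqrt_mul (by norm_num)]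
    field_simp
  have hs2 : (0 : ℝ) < Real.sqrt 2 := Real.sqrt_pos.mpr (by norm_num)
  have hsn : (0 : ℝ) < Real.sqrt n := Real.sqrt_pos.mpr hnR
  have hkey : (c₁ / (2 * Real.sqrt 2)) * ε / Real.sqrt n
      ≤ ((Finset.Icc n m).card : ℝ) * (c₁ * ((2 : ℝ) * n) ^ (-(3 / 2) : ℝ)) := by
    rw [hrpow]
    have heq : (ε * n) * (c₁ * (1 / (2 * n * (Real.sqrt 2 * Real.sqrt n))))
        = (c₁ / (2 * Real.sqrt 2)) * ε / Real.sqrt n := by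
      field_simp
    rw [← heq]
    have hpos : 0 ≤ c₁ * (1 / (2 * n * (Real.sqrt 2 * Real.sqrt n))) := by positivity
    exact mul_le_mul_of_nonneg_right hcardlow hpos
  exact hkey.trans (hsumlow.trans hfin)
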